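/- Suppose real numbers λ_v, indexed by nonzero v ∈ F_3^n, satisfy: for all x ∈ F_3^n, Σ_{v : v·x = 1} λ_v = 0 and Σ_{v : v·x = 2} λ_v = 0 (sums over nonzero v with the given mod-3 dot product condition). Then λ_v = 0 for all nonzero v. -/

import Mathlib

open Finset

/-- If the real numbers `λ_v` (for nonzero `v ∈ F_3^n`) satisfy, for every `x`,
`∑_{v ≠ 0, v⬝x = 1} λ_v = 0` and `∑_{v ≠ 0, v⬝x = 2} λ_v = 0`, then all `λ_v = 0`. -/
theorem stmt3 (n : ℕ) (lam : (Fin n → ZMod 3) → ℝ)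
    (h1 : ∀ x : Fin n → ZMod 3,
      ∑ v ∈ Finset.univ.filter
          (fun v : Fin n → ZMod 3 => v ≠ 0 ∧ ∑ i, v i * x i = 1), lam v = 0)
    (h2 : ∀ x : Fin n → ZMod 3,
      ∑ v ∈ Finset.univ.filter
          (fun v : Fin n → ZMod 3 => v ≠ 0 ∧ ∑ i, v i * x i = 2), lam v = 0) :
    ∀ v : Fin n → ZMod 3, v ≠ 0 → lam v = 0 := by
  haveI : Fact (Nat.Prime 3) := ⟨by norm_num⟩
  have htc : ∀ s : ZMod 3, s = 0 ∨ s = 1 ∨ s = 2 := fun s => by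
    fin_cases s
    · exact Or.inl rfl
    · exact Or.inr (Or.inl rfl)
    · exact Or.inr (Or.inr rfl)
  obtain ⟨ω, hω⟩ : ∃ ω : ℂ, IsPrimitiveRoot ω 3 :=
    ⟨_, Complex.isPrimitiveRoot_exp 3 (by norm_num)⟩
  have hω3 : ω ^ 3 = 1 := hω.pow_eq_one
  have hω1 : ω ≠ 1 := hω.ne_one (by norm_num)
  have hmod : ∀ k : ℕ, ω ^ k = ω ^ (k % 3) := by
    intro k
    conv_lhs => rw [← Nat.div_add_mod k 3]
    rw [pow_add, pow_mul, hω3, one_pow, one_mul]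
  have hval : ∀ a b : ZMod 3, ω ^ a.val * ω ^ b.val = ω ^ (a + b).val := by
    intro a b
    rw [← pow_add, ZMod.val_add]
    exact hmod _
  -- orthogonality
  have orth : ∀ c : Fin n → ZMod 3, c ≠ 0 →
      ∑ x : Fin n → ZMod 3, ω ^ (∑ i, c i * x i).val = 0 := by
    intro c hc
    obtain ⟨i, hi⟩ : ∃ i, c i ≠ 0 := by
      by_contra h; push_neg at h; exact hc (funext h)
    set d : Fin n → ZMod 3 := fun j => if j = i then (c i)⁻¹ else 0 with hd
    have hcd : ∑ j, c j * d j = 1 := by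
      rw [Finset.sum_eq_single i]
      · simp [hd, mul_inv_cancel₀ hi]
      · intro j _ hj; simp [hd, hj]
      · simp
    have e1 : ∑ x : Fin n → ZMod 3, ω ^ (∑ j, c j * x j).val
        = ∑ x : Fin n → ZMod 3, ω ^ (∑ j, c j * (x j + d j)).val :=
      (Equiv.sum_comp (Equiv.addRight d)
        (fun x => ω ^ (∑ j, c j * x j).val)).symm
    have e2 : ∀ x : Fin n → ZMod 3, ω ^ (∑ j, c j * (x j + d j)).val
        = ω * ω ^ (∑ j, c j * x j).val := by
      intro x
      have hs : ∑ j, c j * (x j + d j) = (∑ j, c j * x j) + 1 := by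
        simp [mul_add, Finset.sum_add_distrib, hcd]
      rw [hs, ← hval]
      have h1v : ((1 : ZMod 3)).val = 1 := rfl
      rw [h1v]; ring
    rw [Finset.sum_congr rfl (fun x _ => e2 x), ← Finset.mul_sum] at e1
    have : (1 - ω) * ∑ x : Fin n → ZMod 3, ω ^ (∑ j, c j * x j).val = 0 := by
      linear_combination e1
    rcases mul_eq_zero.mp this with h | h
    · exact absurd (by linear_combination -h) hω1
    · exact h
  -- key identity
  set A : Finset (Fin n → ZMod 3) := Finset.univ.filter (fun v => v ≠ 0) with hA
  have key : ∀ x : Fin n → ZMod 3,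
      ∑ v ∈ A, (lam v : ℂ) * ω ^ (∑ i, v i * x i).val
        = ∑ v ∈ A, (lam v : ℂ) := by
    intro x
    have split : ∀ f : (Fin n → ZMod 3) → ℂ,
        ∑ v ∈ A, f v
          = ∑ t : ZMod 3, ∑ v ∈ Finset.univ.filter
              (fun v : Fin n → ZMod 3 => v ≠ 0 ∧ ∑ i, v i * x i = t), f v := by
      intro f
      rw [← Finset.sum_fiberwise_of_maps_to
        (g := fun v : Fin n → ZMod 3 => ∑ i, v i * x i)
        (t := (Finset.univ : Finset (ZMod 3))) (fun v _ => Finset.mem_univ _) f]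
      refine Finset.sum_congr rfl (fun t _ => ?_)
      refine Finset.sum_congr ?_ (fun _ _ => rfl)
      rw [hA, Finset.filter_filter]
    have hBcast : ∀ t : ZMod 3,
        (∑ v ∈ Finset.univ.filter
          (fun v : Fin n → ZMod 3 => v ≠ 0 ∧ ∑ i, v i * x i = t), (lam v : ℂ))
        = ((∑ v ∈ Finset.univ.filter
          (fun v : Fin n → ZMod 3 => v ≠ 0 ∧ ∑ i, v i * x i = t), lam v : ℝ) : ℂ) := by
      intro t; push_cast; rfl
    have hB1 : (∑ v ∈ Finset.univ.filter
        (fun v : Fin n → ZMod 3 => v ≠ 0 ∧ ∑ i, v i * x i = 1), (lam v : ℂ)) = 0 := by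
      rw [hBcast, h1 x]; norm_num
    have hB2 : (∑ v ∈ Finset.univ.filter
        (fun v : Fin n → ZMod 3 => v ≠ 0 ∧ ∑ i, v i * x i = 2), (lam v : ℂ)) = 0 := by
      rw [hBcast, h2 x]; norm_num
    rw [split (fun v => (lam v : ℂ) * ω ^ (∑ i, v i * x i).val),
        split (fun v => (lam v : ℂ))]
    refine Finset.sum_congr rfl (fun t _ => ?_)
    have : ∑ v ∈ Finset.univ.filter
        (fun v : Fin n → ZMod 3 => v ≠ 0 ∧ ∑ i, v i * x i = t),
          (lam v : ℂ) * ω ^ (∑ i, v i * x i).val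
        = ω ^ t.val * ∑ v ∈ Finset.univ.filter
            (fun v : Fin n → ZMod 3 => v ≠ 0 ∧ ∑ i, v i * x i = t), (lam v : ℂ) := by
      rw [Finset.mul_sum]
      refine Finset.sum_congr rfl (fun v hv => ?_)
      rw [(Finset.mem_filter.mp hv).2.2]; ring
    rw [this]
    rcases htc t with rfl | rfl | rfl
    · norm_num [show ((0 : ZMod 3)).val = 0 from rfl]
    · rw [hB1]; simp
    · rw [hB2]; simp
  -- conclusion
  intro w hw
  have hu : -w ≠ 0 := neg_ne_zero.mpr hw
  have hwA : w ∈ A := by rw [hA]; simp [hw]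
  have h0 : ∑ x : Fin n → ZMod 3, ω ^ (∑ i, (-w) i * x i).val *
      (∑ v ∈ A, (lam v : ℂ) * ω ^ (∑ i, v i * x i).val) = 0 := by
    rw [Finset.sum_congr rfl (fun x _ => by rw [key x]), ← Finset.sum_mul, orth _ hu,
      zero_mul]
  have h0' : ∑ x : Fin n → ZMod 3, ω ^ (∑ i, (-w) i * x i).val *
      (∑ v ∈ A, (lam v : ℂ) * ω ^ (∑ i, v i * x i).val)
      = ∑ v ∈ A, (lam v : ℂ) * ∑ x : Fin n → ZMod 3, ω ^ (∑ i, (-w + v) i * x i).val := by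
    have inner : ∀ x : Fin n → ZMod 3, ω ^ (∑ i, (-w) i * x i).val *
        (∑ v ∈ A, (lam v : ℂ) * ω ^ (∑ i, v i * x i).val)
        = ∑ v ∈ A, (lam v : ℂ) * ω ^ (∑ i, (-w + v) i * x i).val := by
      intro x
      rw [Finset.mul_sum]
      refine Finset.sum_congr rfl (fun v _ => ?_)
      have hdot : ∑ i, (-w + v) i * x i = (∑ i, (-w) i * x i) + ∑ i, v i * x i := by
        rw [← Finset.sum_add_distrib]
        refine Finset.sum_congr rfl (fun i _ => ?_)
        simp [add_mul]
      rw [hdot, ← hval]; ring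
    rw [Finset.sum_congr rfl (fun x _ => inner x), Finset.sum_comm]
    refine Finset.sum_congr rfl (fun v _ => ?_)
    rw [← Finset.mul_sum]
  have hsingle : ∑ v ∈ A, (lam v : ℂ) * ∑ x : Fin n → ZMod 3,
      ω ^ (∑ i, (-w + v) i * x i).val = (lam w : ℂ) * (3 : ℂ) ^ n := by
    rw [Finset.sum_eq_single w]
    · have : (-w + w) = (0 : Fin n → ZMod 3) := by simp
      rw [this]
      have hz : ∀ x : Fin n → ZMod 3, (∑ i, (0 : Fin n → ZMod 3) i * x i) = 0 := by
        intro x; simp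
      rw [Finset.sum_congr rfl (fun x _ => by rw [hz x])]
      simp [Finset.card_univ]
    · intro v hvA hvw
      have : -w + v ≠ 0 := by
        intro h
        exact hvw (neg_add_eq_zero.mp h).symm
      rw [orth _ this, mul_zero]
    · intro h; exact absurd hwA h
  have hfin : (lam w : ℂ) * (3 : ℂ) ^ n = 0 := by rw [← hsingle, ← h0', h0]
  have h3 : ((3 : ℂ)) ^ n ≠ 0 := pow_ne_zero _ (by norm_num)
  have : (lam w : ℂ) = 0 := by
    rcases mul_eq_zero.mp hfin with h | h
    · exact h
    · exact absurd h h3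
  exact_mod_cast this
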